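/- For a square tensor A with ‖A‖_F > 0 and 0 < α < 1/‖A‖_F, the series Σ_{p≥1} α^p A^p converges and its sum equals (I − αA)^{−1} − I; in particular I − αA is invertible under the Einstein product. -/

import Mathlib

open scoped BigOperators

/-- The Einstein product. -/
def einstein {α β γ : Type*} [Fintype β] (A : α → β → ℝ) (B : β → γ → ℝ) : α → γ → ℝ :=
  fun i k => ∑ j, A i j * B j k

/-- The identity tensor under the Einstein product. -/
def identT {α : Type*} [DecidableEq α] : α → α → ℝ :=
  fun i j => if i = j then 1 else 0

/-- Einstein powers of a square tensor. -/
def einPow {α : Type*} [Fintype α] [DecidableEq α] (A : α → α → ℝ) : ℕ → (α → α → ℝ)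
  | 0 => identT
  | p + 1 => einstein A (einPow A p)

/-- Frobenius norm of a tensor. -/
noncomputable def frob {α β : Type*} [Fintype α] [Fintype β] (A : α → β → ℝ) : ℝ :=
  Real.sqrt (∑ i, ∑ j, A i j ^ 2)

section aux
set_option linter.unusedSectionVars false

variable {ι : Type*} [Fintype ι] [DecidableEq ι]

lemma einstein_id_right (A : ι → ι → ℝ) : einstein A identT = A := by
  funext i k
  simp [einstein, identT]

lemma einstein_id_left (A : ι → ι → ℝ) : einstein identT A = A := by
  funext i k
  simp [einstein, identT]

lemma einstein_assoc {κ μ ν : Type*} [Fintype κ] [Fintype μ]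
    (A : ι → κ → ℝ) (B : κ → μ → ℝ) (C : μ → ν → ℝ) :
    einstein (einstein A B) C = einstein A (einstein B C) := by
  funext i k
  simp only [einstein, Finset.sum_mul, Finset.mul_sum]
  rw [Finset.sum_comm]
  exact Finset.sum_congr rfl fun j _ => Finset.sum_congr rfl fun l _ => by ring

lemma einPow_succ' (A : ι → ι → ℝ) (p : ℕ) :
    einPow A (p + 1) = einstein (einPow A p) A := by
  induction p with
  | zero => simp [einPow, einstein_id_right, einstein_id_left]
  | succ p ih =>
      show einstein A (einPow A (p + 1)) = einstein (einPow A (p + 1)) A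
      conv_lhs => rw [ih]
      rw [← einstein_assoc]
      rfl

lemma frob_nonneg {κ : Type*} [Fintype κ] (A : ι → κ → ℝ) : 0 ≤ frob A :=
  Real.sqrt_nonneg _

lemma abs_le_frob {κ : Type*} [Fintype κ] (A : ι → κ → ℝ) (i : ι) (j : κ) :
    |A i j| ≤ frob A := by
  rw [← Real.sqrt_sq_eq_abs]
  apply Real.sqrt_le_sqrt
  calc A i j ^ 2 ≤ ∑ j', A i j' ^ 2 :=
        Finset.single_le_sum (f := fun j' => A i j' ^ 2)
          (fun j' _ => sq_nonneg _) (Finset.mem_univ j)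
    _ ≤ ∑ i', ∑ j', A i' j' ^ 2 :=
        Finset.single_le_sum (f := fun i' => ∑ j', A i' j' ^ 2)
          (fun i' _ => Finset.sum_nonneg fun j' _ => sq_nonneg _) (Finset.mem_univ i)

lemma frob_mul_le {κ μ : Type*} [Fintype κ] [Fintype μ] (A : ι → κ → ℝ) (B : κ → μ → ℝ) :
    frob (einstein A B) ≤ frob A * frob B := by
  unfold frob
  rw [← Real.sqrt_mul (Finset.sum_nonneg fun i _ => Finset.sum_nonneg fun j _ => sq_nonneg _)]
  apply Real.sqrt_le_sqrt
  calc ∑ i, ∑ k, einstein A B i k ^ 2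
      ≤ ∑ i, ∑ k, (∑ j, A i j ^ 2) * (∑ j, B j k ^ 2) := by
        apply Finset.sum_le_sum; intro i _
        apply Finset.sum_le_sum; intro k _
        exact Finset.sum_mul_sq_le_sq_mul_sq Finset.univ _ _
    _ = (∑ i, ∑ j, A i j ^ 2) * (∑ k, ∑ j, B j k ^ 2) := by
        rw [Finset.sum_mul_sum]
    _ = (∑ i, ∑ j, A i j ^ 2) * (∑ j, ∑ k, B j k ^ 2) := by
        rw [Finset.sum_comm (f := fun k j => B j k ^ 2)]

lemma frob_einPow_le (A : ι → ι → ℝ) (p : ℕ) :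
    frob (einPow A (p + 1)) ≤ frob A ^ (p + 1) := by
  induction p with
  | zero =>
      show frob (einstein A (einPow A 0)) ≤ frob A ^ 1
      rw [show einPow A 0 = identT from rfl, einstein_id_right, pow_one]
  | succ p ih =>
      show frob (einstein A (einPow A (p + 1))) ≤ _
      calc frob (einstein A (einPow A (p + 1))) ≤ frob A * frob (einPow A (p + 1)) :=
            frob_mul_le _ _
        _ ≤ frob A * frob A ^ (p + 1) :=
            mul_le_mul_of_nonneg_left ih (frob_nonneg A)
        _ = frob A ^ (p + 2) := by ring

lemma einstein_sub_left (X Y B : ι → ι → ℝ) :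
    einstein (X - Y) B = einstein X B - einstein Y B := by
  funext i k
  simp [einstein, sub_mul, Finset.sum_sub_distrib]

lemma einstein_sub_right (X Y B : ι → ι → ℝ) :
    einstein B (X - Y) = einstein B X - einstein B Y := by
  funext i k
  simp [einstein, mul_sub, Finset.sum_sub_distrib]

lemma einstein_add_right (X Y B : ι → ι → ℝ) :
    einstein B (X + Y) = einstein B X + einstein B Y := by
  funext i k
  simp [einstein, mul_add, Finset.sum_add_distrib]

lemma einstein_add_left (X Y B : ι → ι → ℝ) :
    einstein (X + Y) B = einstein X B + einstein Y B := by
  funext i k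
  simp [einstein, add_mul, Finset.sum_add_distrib]

lemma einstein_smul_left (c : ℝ) (X B : ι → ι → ℝ) :
    einstein (c • X) B = c • einstein X B := by
  funext i k
  simp [einstein, Finset.mul_sum, mul_assoc]

lemma einstein_smul_right (c : ℝ) (X B : ι → ι → ℝ) :
    einstein B (c • X) = c • einstein B X := by
  funext i k
  simp only [einstein, Pi.smul_apply, smul_eq_mul, Finset.mul_sum]
  exact Finset.sum_congr rfl fun j _ => by ring

/-- Left multiplication by `A` under the Einstein product, as a continuous linear map. -/
noncomputable def einL (A : ι → ι → ℝ) : (ι → ι → ℝ) →L[ℝ] (ι → ι → ℝ) :=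
  LinearMap.toContinuousLinearMap
    { toFun := fun B => einstein A B
      map_add' := fun X Y => einstein_add_right X Y A
      map_smul' := fun c X => einstein_smul_right c X A }

/-- Right multiplication by `A` under the Einstein product, as a continuous linear map. -/
noncomputable def einR (A : ι → ι → ℝ) : (ι → ι → ℝ) →L[ℝ] (ι → ι → ℝ) :=
  LinearMap.toContinuousLinearMap
    { toFun := fun B => einstein B A
      map_add' := fun X Y => einstein_add_left X Y A
      map_smul' := fun c X => einstein_smul_left c X A }

@[simp] lemma einL_apply (A B : ι → ι → ℝ) : einL A B = einstein A B := rfl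
@[simp] lemma einR_apply (A B : ι → ι → ℝ) : einR A B = einstein B A := rfl

end aux

/-- For 0 < α < 1/‖A‖_F, the series Σ_{p≥1} αᵖ Aᵖ converges, I − αA is invertible
under the Einstein product, and the sum equals (I − αA)⁻¹ − I. -/
theorem tensor_resolvent {N : ℕ} {I : Fin N → ℕ}
    (A : ((k : Fin N) → Fin (I k)) → ((k : Fin N) → Fin (I k)) → ℝ)
    (α : ℝ) (hA : 0 < frob A) (hα : 0 < α) (hα' : α < 1 / frob A) :
    Summable (fun p : ℕ => α ^ (p + 1) • einPow A (p + 1)) ∧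
      ∃ B : ((k : Fin N) → Fin (I k)) → ((k : Fin N) → Fin (I k)) → ℝ,
        einstein (identT - α • A) B = identT ∧
        einstein B (identT - α • A) = identT ∧
        (∑' p : ℕ, α ^ (p + 1) • einPow A (p + 1)) = B - identT := by
  set f : ℕ → (((k : Fin N) → Fin (I k)) → ((k : Fin N) → Fin (I k)) → ℝ) :=
    fun p => α ^ (p + 1) • einPow A (p + 1) with hf
  set r : ℝ := α * frob A with hrdef
  have hr0 : 0 ≤ r := le_of_lt (mul_pos hα hA)
  have hr1 : r < 1 := by
    rw [hrdef, ← lt_div_iff₀ hA]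
    exact hα'
  -- Summability
  have hS : Summable f := by
    rw [Pi.summable]
    intro i
    rw [Pi.summable]
    intro j
    have hgeo : Summable fun p : ℕ => r ^ (p + 1) := by
      simpa [pow_succ'] using (summable_geometric_of_lt_one hr0 hr1).mul_left r
    refine Summable.of_norm_bounded hgeo fun p => ?_
    have h1 : |einPow A (p + 1) i j| ≤ frob A ^ (p + 1) :=
      le_trans (abs_le_frob _ i j) (frob_einPow_le A p)
    have : ‖f p i j‖ = α ^ (p + 1) * |einPow A (p + 1) i j| := by
      rw [hf]
      simp only [Pi.smul_apply, smul_eq_mul, Real.norm_eq_abs, abs_mul, abs_pow,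
        abs_of_pos hα]
    rw [this, hrdef, mul_pow]
    exact mul_le_mul_of_nonneg_left h1 (le_of_lt (pow_pos hα (p + 1)))
  refine ⟨hS, ?_⟩
  set S := ∑' p, f p with hSdef
  -- shift identity via left/right multiplication by α • A
  have hshift : (∑' p, f (p + 1)) = S - f 0 := by
    have := Summable.tsum_eq_zero_add hS
    rw [hSdef, this]
    abel
  have hL : einstein (α • A) S = S - f 0 := by
    have hmap : einL (α • A) S = ∑' p, einL (α • A) (f p) :=
      ContinuousLinearMap.map_tsum _ hS
    have hterm : ∀ p, einL (α • A) (f p) = f (p + 1) := by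
      intro p
      show einstein (α • A) (α ^ (p + 1) • einPow A (p + 1)) = f (p + 1)
      rw [einstein_smul_left, einstein_smul_right, smul_smul, ← pow_succ']
      rfl
    rw [show einstein (α • A) S = einL (α • A) S from rfl, hmap]
    simp_rw [hterm]
    exact hshift
  have hR : einstein S (α • A) = S - f 0 := by
    have hmap : einR (α • A) S = ∑' p, einR (α • A) (f p) :=
      ContinuousLinearMap.map_tsum _ hS
    have hterm : ∀ p, einR (α • A) (f p) = f (p + 1) := by
      intro p
      show einstein (α ^ (p + 1) • einPow A (p + 1)) (α • A) = f (p + 1)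
      rw [einstein_smul_right, einstein_smul_left, smul_smul, ← pow_succ',
        ← einPow_succ']
    rw [show einstein S (α • A) = einR (α • A) S from rfl, hmap]
    simp_rw [hterm]
    exact hshift
  have hf0 : f 0 = α • A := by simp [hf, show einPow A 1 = einstein A identT from rfl,
    einstein_id_right]
  refine ⟨identT + S, ?_, ?_, ?_⟩
  · rw [einstein_sub_left, einstein_id_left, einstein_add_right, einstein_id_right, hL, hf0]
    abel
  · rw [einstein_sub_right, einstein_id_right, einstein_add_left, einstein_id_left, hR, hf0]
    abel
  · abel
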